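/- Let ε ∈ (0,1) and let {x_i}_{i∈I} be a finite family of real unit vectors with ⟨x_i, x_j⟩ ≥ 1 − ε for all i, j. If y is a unit vector that is a nonnegative linear combination of the x_i, then there is a convex combination ρ of the rank-one matrices x_i x_iᵀ such that y yᵀ ≤ ρ/(1 − ε) in the positive semidefinite order. -/

import Mathlib

open scoped BigOperators

noncomputable section

open Matrix

private lemma dotProduct_sum' {n ι : Type*} [Fintype n] [Fintype ι]
    (v : n → ℝ) (f : ι → n → ℝ) : v ⬝ᵥ (∑ i, f i) = ∑ i, v ⬝ᵥ f i := by
  simp only [dotProduct, Finset.sum_apply, Finset.mul_sum]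
  exact Finset.sum_comm

private lemma sum_dotProduct' {n ι : Type*} [Fintype n] [Fintype ι]
    (f : ι → n → ℝ) (v : n → ℝ) : (∑ i, f i) ⬝ᵥ v = ∑ i, f i ⬝ᵥ v := by
  simp only [dotProduct, Finset.sum_apply, Finset.sum_mul]
  exact Finset.sum_comm

private lemma sum_mulVec' {n ι : Type*} [Fintype n] [Fintype ι]
    (A : ι → Matrix n n ℝ) (v : n → ℝ) : (∑ i, A i) *ᵥ v = ∑ i, A i *ᵥ v := by
  ext k
  simp only [Matrix.mulVec, dotProduct, Matrix.sum_apply, Finset.sum_apply,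
    Finset.sum_mul]
  exact Finset.sum_comm

/-- Quadratic form of a rank-one matrix. -/
private lemma quad_vecMulVec {dm : ℕ} (a v : Fin dm → ℝ) :
    v ⬝ᵥ (Matrix.vecMulVec a a) *ᵥ v = (a ⬝ᵥ v) ^ 2 := by
  simp only [dotProduct, Matrix.mulVec, Matrix.vecMulVec_apply, sq,
    Finset.mul_sum]
  refine Finset.sum_comm.trans (Finset.sum_congr rfl fun i _ => ?_)
  rw [Finset.sum_mul]
  exact Finset.sum_congr rfl fun j _ => by ring

/-- If unit vectors `x_i` pairwise satisfy `⟨x_i, x_j⟩ ≥ 1 - ε` and the unit vector `y`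
is a nonnegative combination of the `x_i`, then some convex combination `ρ` of the
`x_i x_iᵀ` satisfies `y yᵀ ≤ ρ / (1 - ε)`. -/
theorem stmt18 {dm : ℕ} {ι : Type*} [Fintype ι] (ε : ℝ) (hε0 : 0 < ε) (hε1 : ε < 1)
    (x : ι → (Fin dm → ℝ)) (hx : ∀ i, ∑ k, x i k ^ 2 = 1)
    (hdot : ∀ i j, 1 - ε ≤ ∑ k, x i k * x j k)
    (y : Fin dm → ℝ) (hy : ∑ k, y k ^ 2 = 1)
    (c : ι → ℝ) (hc : ∀ i, 0 ≤ c i) (hyc : y = ∑ i, c i • x i) :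
    ∃ lam : ι → ℝ, (∀ i, 0 ≤ lam i) ∧ (∑ i, lam i = 1) ∧
      ((1 - ε)⁻¹ • (∑ i, lam i • Matrix.vecMulVec (x i) (x i)) -
        Matrix.vecMulVec y y).PosSemidef := by
  have hε : (0:ℝ) < 1 - ε := by linarith
  -- basic dot product facts
  have hyy : y ⬝ᵥ y = 1 := by simpa [dotProduct, sq] using hy
  have hxij : ∀ i j, 1 - ε ≤ x i ⬝ᵥ x j := fun i j => hdot i j
  -- dotting anything with y, via the combination
  have hydotr : ∀ v : Fin dm → ℝ, v ⬝ᵥ y = ∑ i, c i * (v ⬝ᵥ x i) := by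
    intro v
    rw [hyc, dotProduct_sum']
    refine Finset.sum_congr rfl fun i _ => ?_
    rw [dotProduct_smul, smul_eq_mul]
  have hydotl : ∀ v : Fin dm → ℝ, y ⬝ᵥ v = ∑ i, c i * (x i ⬝ᵥ v) := by
    intro v
    rw [hyc, sum_dotProduct']
    refine Finset.sum_congr rfl fun i _ => ?_
    rw [smul_dotProduct, smul_eq_mul]
  set S : ℝ := ∑ i, c i with hS
  have hS0 : 0 ≤ S := Finset.sum_nonneg fun i _ => hc i
  set d : ι → ℝ := fun i => x i ⬝ᵥ y with hd
  -- d i ≥ (1-ε) S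
  have hdge : ∀ i, (1 - ε) * S ≤ d i := by
    intro i
    have h1 : d i = ∑ j, c j * (x i ⬝ᵥ x j) := hydotr (x i)
    rw [h1, hS, Finset.mul_sum]
    refine Finset.sum_le_sum fun j _ => ?_
    rw [mul_comm (1 - ε) (c j)]
    exact mul_le_mul_of_nonneg_left (hxij i j) (hc j)
  -- S > 0 (since y ≠ 0)
  have hSpos : 0 < S := by
    rcases hS0.lt_or_eq with h | h
    · exact h
    · exfalso
      have hc0 : ∀ i, c i = 0 := fun i =>
        (Finset.sum_eq_zero_iff_of_nonneg fun i _ => hc i).mp h.symm i (Finset.mem_univ i)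
      have : y ⬝ᵥ y = 0 := by rw [hydotl y]; simp [hc0]
      rw [hyy] at this; norm_num at this
  have hdpos : ∀ i, 0 < d i := fun i => lt_of_lt_of_le (mul_pos hε hSpos) (hdge i)
  -- the weights
  set μ : ι → ℝ := fun i => c i / d i with hμ
  have hμ0 : ∀ i, 0 ≤ μ i := fun i => div_nonneg (hc i) (hdpos i).le
  have hμd : ∀ i, μ i * d i = c i := fun i => div_mul_cancel₀ (c i) (hdpos i).ne'
  set T : ℝ := ∑ i, μ i with hT
  -- T ≤ (1-ε)⁻¹
  have hTle : T ≤ (1 - ε)⁻¹ := by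
    have h1 : T ≤ ∑ i, c i / ((1 - ε) * S) := by
      refine Finset.sum_le_sum fun i _ => ?_
      rw [hμ, div_le_div_iff₀ (hdpos i) (mul_pos hε hSpos)]
      exact mul_le_mul_of_nonneg_left (hdge i) (hc i)
    have h2 : ∑ i, c i / ((1 - ε) * S) = (1 - ε)⁻¹ := by
      rw [← Finset.sum_div, ← hS]
      field_simp
    linarith [h1, h2.le]
  -- T > 0
  have hTpos : 0 < T := by
    obtain ⟨i, hi⟩ : ∃ i, 0 < c i := by
      by_contra hcon
      push_neg at hcon
      have : S ≤ 0 := Finset.sum_nonpos fun i _ => hcon i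
      linarith
    refine Finset.sum_pos' (fun j _ => hμ0 j) ⟨i, Finset.mem_univ i, ?_⟩
    exact div_pos hi (hdpos i)
  -- Σ μ_i d_i^2 = 1
  have hsum1 : ∑ i, μ i * d i ^ 2 = 1 := by
    have h1 : ∀ i, μ i * d i ^ 2 = c i * d i := by
      intro i
      rw [sq, ← mul_assoc, hμd i]
    rw [Finset.sum_congr rfl fun i _ => h1 i]
    exact (hydotl y).symm.trans hyy
  -- the convex weights
  set lam : ι → ℝ := fun i => μ i / T with hlam
  refine ⟨lam, fun i => div_nonneg (hμ0 i) hTpos.le, ?_, ?_⟩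
  · rw [hlam, ← Finset.sum_div, ← hT, div_self hTpos.ne']
  -- positive semidefiniteness
  refine Matrix.posSemidef_iff_dotProduct_mulVec.mpr ⟨?_, ?_⟩
  · -- Hermitian
    show _ = _
    ext i j
    simp [Matrix.conjTranspose_apply, Matrix.sub_apply, Matrix.smul_apply,
      Matrix.sum_apply, Matrix.vecMulVec_apply, mul_comm]
  · -- quadratic form
    intro v
    have hAv : v ⬝ᵥ ((∑ i, lam i • Matrix.vecMulVec (x i) (x i)) *ᵥ v)
        = ∑ i, lam i * (x i ⬝ᵥ v) ^ 2 := by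
      rw [sum_mulVec', dotProduct_sum']
      refine Finset.sum_congr rfl fun i _ => ?_
      rw [Matrix.smul_mulVec, dotProduct_smul, smul_eq_mul, quad_vecMulVec]
    have hkey : v ⬝ᵥ (((1 - ε)⁻¹ • (∑ i, lam i • Matrix.vecMulVec (x i) (x i)) -
        Matrix.vecMulVec y y) *ᵥ v)
        = (1 - ε)⁻¹ * (∑ i, lam i * (x i ⬝ᵥ v) ^ 2) - (y ⬝ᵥ v) ^ 2 := by
      rw [Matrix.sub_mulVec, dotProduct_sub, Matrix.smul_mulVec,
        dotProduct_smul, smul_eq_mul, hAv, quad_vecMulVec]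
    -- Cauchy-Schwarz step
    set a : ι → ℝ := fun i => x i ⬝ᵥ v with ha
    have hcs : (y ⬝ᵥ v) ^ 2 ≤ ∑ i, μ i * a i ^ 2 := by
      have h1 : y ⬝ᵥ v = ∑ i, (Real.sqrt (μ i) * d i) * (Real.sqrt (μ i) * a i) := by
        rw [hydotl v]
        refine Finset.sum_congr rfl fun i _ => ?_
        have hss : Real.sqrt (μ i) * Real.sqrt (μ i) = μ i := Real.mul_self_sqrt (hμ0 i)
        calc c i * (x i ⬝ᵥ v) = μ i * d i * a i := by rw [hμd i]
          _ = (Real.sqrt (μ i) * d i) * (Real.sqrt (μ i) * a i) := by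
              rw [show (Real.sqrt (μ i) * d i) * (Real.sqrt (μ i) * a i)
                  = (Real.sqrt (μ i) * Real.sqrt (μ i)) * (d i * a i) by ring, hss]; ring
      have h2 := Finset.sum_mul_sq_le_sq_mul_sq Finset.univ
        (fun i => Real.sqrt (μ i) * d i) (fun i => Real.sqrt (μ i) * a i)
      have h3 : ∑ i, (Real.sqrt (μ i) * d i) ^ 2 = 1 := by
        rw [← hsum1]
        refine Finset.sum_congr rfl fun i _ => ?_
        rw [mul_pow, Real.sq_sqrt (hμ0 i)]
      have h4 : ∑ i, (Real.sqrt (μ i) * a i) ^ 2 = ∑ i, μ i * a i ^ 2 := by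
        refine Finset.sum_congr rfl fun i _ => ?_
        rw [mul_pow, Real.sq_sqrt (hμ0 i)]
      rw [h1]
      calc (∑ i, (Real.sqrt (μ i) * d i) * (Real.sqrt (μ i) * a i)) ^ 2
          ≤ (∑ i, (Real.sqrt (μ i) * d i) ^ 2) * (∑ i, (Real.sqrt (μ i) * a i) ^ 2) := h2
        _ = ∑ i, μ i * a i ^ 2 := by rw [h3, h4, one_mul]
    -- relate μ-sum to lam-sum
    have hμlam : ∑ i, μ i * a i ^ 2 = T * ∑ i, lam i * a i ^ 2 := by
      rw [Finset.mul_sum]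
      refine Finset.sum_congr rfl fun i _ => ?_
      rw [hlam]
      field_simp
    have hQ0 : 0 ≤ ∑ i, lam i * a i ^ 2 :=
      Finset.sum_nonneg fun i _ => mul_nonneg (div_nonneg (hμ0 i) hTpos.le) (sq_nonneg _)
    have hfinal : (y ⬝ᵥ v) ^ 2 ≤ (1 - ε)⁻¹ * ∑ i, lam i * a i ^ 2 := by
      calc (y ⬝ᵥ v) ^ 2 ≤ ∑ i, μ i * a i ^ 2 := hcs
        _ = T * ∑ i, lam i * a i ^ 2 := hμlam
        _ ≤ (1 - ε)⁻¹ * ∑ i, lam i * a i ^ 2 := mul_le_mul_of_nonneg_right hTle hQ0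
    simp only [star_trivial]
    rw [hkey]
    linarith
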